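/- Let G = G(m₀,m₁,m₂,m₃) with all mᵢ ≥ 1 be the twisted graph. Then G is triangle-free. -/

import Mathlib

/-- The edge set of the tournament `T₄`. -/
def T4rel (i i' : Fin 4) : Prop :=
  (i.val, i'.val) ∈ [(0, 1), (0, 2), (0, 3), (1, 2), (2, 3), (3, 1)]

/-- The twisted graph `G(m₀, m₁, m₂, m₃)` where `m i` is the number of 4-cycles
in part `i`.  Vertices are triples `(i, j, x)` with `i ∈ Fin 4`, `j < m i`,
`x ∈ Z/4`. -/
def twistedGraph (m : Fin 4 → ℕ) :
    SimpleGraph {v : Fin 4 × ℕ × ZMod 4 // v.2.1 < m v.1} where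
  Adj p q :=
    (p.1.1 = q.1.1 ∧ p.1.2.1 = q.1.2.1 ∧
      (q.1.2.2 = p.1.2.2 + 1 ∨ p.1.2.2 = q.1.2.2 + 1)) ∨
    (p.1.1 = q.1.1 ∧ p.1.2.1 ≠ q.1.2.1 ∧ q.1.2.2 = p.1.2.2 + 2) ∨
    (T4rel p.1.1 q.1.1 ∧ q.1.2.2 = p.1.2.2 + 3) ∨
    (T4rel q.1.1 p.1.1 ∧ p.1.2.2 = q.1.2.2 + 3)
  symm := by
    constructor
    rintro ⟨⟨i, j, x⟩, hp⟩ ⟨⟨i', j', x'⟩, hq⟩ h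
    dsimp at h ⊢
    rcases h with ⟨h1, h2, h3⟩ | ⟨h1, h2, h3⟩ | ⟨h1, h2⟩ | ⟨h1, h2⟩
    · exact Or.inl ⟨h1.symm, h2.symm, h3.symm⟩
    · refine Or.inr (Or.inl ⟨h1.symm, Ne.symm h2, ?_⟩)
      rw [h3, add_assoc, show (2 : ZMod 4) + 2 = 0 by decide, add_zero]
    · exact Or.inr (Or.inr (Or.inr ⟨h1, h2⟩))
    · exact Or.inr (Or.inr (Or.inl ⟨h1, h2⟩))
  loopless := by
    constructor
    rintro ⟨⟨i, j, x⟩, hp⟩ h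
    dsimp at h
    rcases h with ⟨-, -, h | h⟩ | ⟨-, h, -⟩ | ⟨h, -⟩ | ⟨h, -⟩
    · simp only [left_eq_add] at h; exact absurd h (by decide)
    · simp only [left_eq_add] at h; exact absurd h (by decide)
    · exact h rfl
    · revert h; have := i.is_lt; unfold T4rel; fin_cases i <;> decide
    · revert h; have := i.is_lt; unfold T4rel; fin_cases i <;> decide


/-- Abstract adjacency pattern: `e` records whether the two `j` coordinates are equal. -/
def Apat (i i' : Fin 4) (e : Bool) (x x' : ZMod 4) : Prop :=
  (i = i' ∧ e = true ∧ (x' = x + 1 ∨ x = x' + 1)) ∨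
  (i = i' ∧ e = false ∧ x' = x + 2) ∨
  (T4rel i i' ∧ x' = x + 3) ∨
  (T4rel i' i ∧ x = x' + 3)

instance (i i' : Fin 4) (e : Bool) (x x' : ZMod 4) : Decidable (Apat i i' e x x') := by
  unfold Apat T4rel; infer_instance

lemma key : ∀ (i1 i2 i3 : Fin 4) (x1 x2 x3 : ZMod 4) (e12 e13 e23 : Bool),
    (e12 = true → e13 = true → e23 = true) →
    (e12 = true → e23 = true → e13 = true) →
    (e13 = true → e23 = true → e12 = true) →
    ¬ (Apat i1 i2 e12 x1 x2 ∧ Apat i1 i3 e13 x1 x3 ∧ Apat i2 i3 e23 x2 x3) := by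
  decide

lemma toA {i i' : Fin 4} {j j' : ℕ} {x x' : ZMod 4}
    (h : (i = i' ∧ j = j' ∧ (x' = x + 1 ∨ x = x' + 1)) ∨
      (i = i' ∧ j ≠ j' ∧ x' = x + 2) ∨
      (T4rel i i' ∧ x' = x + 3) ∨ (T4rel i' i ∧ x = x' + 3)) :
    Apat i i' (decide (j = j')) x x' := by
  rcases h with ⟨h1, h2, h3⟩ | ⟨h1, h2, h3⟩ | h | h
  · exact Or.inl ⟨h1, decide_eq_true h2, h3⟩
  · exact Or.inr (Or.inl ⟨h1, decide_eq_false h2, h3⟩)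
  · exact Or.inr (Or.inr (Or.inl h))
  · exact Or.inr (Or.inr (Or.inr h))

theorem stmt_12 (m : Fin 4 → ℕ) (hm : ∀ i, 1 ≤ m i) :
    (twistedGraph m).CliqueFree 3 := by
  intro t ht
  rw [SimpleGraph.is3Clique_iff] at ht
  obtain ⟨⟨⟨i1, j1, x1⟩, h1⟩, ⟨⟨i2, j2, x2⟩, h2⟩, ⟨⟨i3, j3, x3⟩, h3⟩, hab, hac, hbc, -⟩ := ht
  simp only [twistedGraph] at hab hac hbc
  exact key i1 i2 i3 x1 x2 x3 _ _ _
    (fun a b => decide_eq_true ((of_decide_eq_true a).symm.trans (of_decide_eq_true b)))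
    (fun a b => decide_eq_true ((of_decide_eq_true a).trans (of_decide_eq_true b)))
    (fun a b => decide_eq_true ((of_decide_eq_true a).trans (of_decide_eq_true b).symm))
    ⟨toA hab, toA hac, toA hbc⟩
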